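/- Nominal equality is preserved under substitution: if ∇' ⊢ t₁ ≈ t₂ and the substitution σ respects ∇' with respect to ∇ (meaning ∇ ⊢ a # σ(X) for every pair (a,X) ∈ ∇'), then ∇ ⊢ σ(t₁) ≈ σ(t₂). -/

import Mathlib

abbrev Atom := ℕ
abbrev Var := ℕ
abbrev Perm := List (Atom × Atom)

def swap (p : Atom × Atom) (a : Atom) : Atom :=
  if a = p.1 then p.2 else if a = p.2 then p.1 else a

def permAtom : Perm → Atom → Atom
  | [], a => a
  | p :: π, a => swap p (permAtom π a)

def ds (π π' : Perm) : Set Atom := {a | permAtom π a ≠ permAtom π' a}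

inductive Trm : Type
  | unit : Trm
  | pair : Trm → Trm → Trm
  | fn : ℕ → Trm → Trm
  | atom : Atom → Trm
  | abs : Atom → Trm → Trm
  | susp : Perm → Var → Trm

def permTrm (π : Perm) : Trm → Trm
  | .unit => .unit
  | .pair t₁ t₂ => .pair (permTrm π t₁) (permTrm π t₂)
  | .fn f t => .fn f (permTrm π t)
  | .atom a => .atom (permAtom π a)
  | .abs a t => .abs (permAtom π a) (permTrm π t)
  | .susp π' X => .susp (π ++ π') X

abbrev Env := Set (Atom × Var)

inductive fresh (Γ : Env) (a : Atom) : Trm → Prop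
  | unit : fresh Γ a .unit
  | pair {t₁ t₂} : fresh Γ a t₁ → fresh Γ a t₂ → fresh Γ a (.pair t₁ t₂)
  | fn {f t} : fresh Γ a t → fresh Γ a (.fn f t)
  | abs₁ {t} : fresh Γ a (.abs a t)
  | abs₂ {b t} : a ≠ b → fresh Γ a t → fresh Γ a (.abs b t)
  | atom {b} : a ≠ b → fresh Γ a (.atom b)
  | susp {π X} : (permAtom π.reverse a, X) ∈ Γ → fresh Γ a (.susp π X)

inductive equ (Γ : Env) : Trm → Trm → Prop
  | unit : equ Γ .unit .unit
  | pair {t₁ t₂ s₁ s₂} : equ Γ t₁ t₂ → equ Γ s₁ s₂ → equ Γ (.pair t₁ s₁) (.pair t₂ s₂)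
  | fn {f t₁ t₂} : equ Γ t₁ t₂ → equ Γ (.fn f t₁) (.fn f t₂)
  | abs₁ {a t₁ t₂} : equ Γ t₁ t₂ → equ Γ (.abs a t₁) (.abs a t₂)
  | abs₂ {a b t₁ t₂} : a ≠ b → fresh Γ a t₂ → equ Γ t₁ (permTrm [(a, b)] t₂) →
      equ Γ (.abs a t₁) (.abs b t₂)
  | atom {a} : equ Γ (.atom a) (.atom a)
  | susp {π π' X} : (∀ c ∈ ds π π', (c, X) ∈ Γ) → equ Γ (.susp π X) (.susp π' X)

inductive weak : Trm → Trm → Prop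
  | unit : weak .unit .unit
  | atom {a} : weak (.atom a) (.atom a)
  | fn {f t t'} : weak t t' → weak (.fn f t) (.fn f t')
  | pair {t₁ t₂ s₁ s₂} : weak t₁ s₁ → weak t₂ s₂ → weak (.pair t₁ t₂) (.pair s₁ s₂)
  | abs {a t t'} : weak t t' → weak (.abs a t) (.abs a t')
  | susp {π π' X} : ds π π' = ∅ → weak (.susp π X) (.susp π' X)

def subst (σ : Var → Option Trm) : Trm → Trm
  | .unit => .unit
  | .pair t₁ t₂ => .pair (subst σ t₁) (subst σ t₂)
  | .fn f t => .fn f (subst σ t)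
  | .atom a => .atom a
  | .abs a t => .abs a (subst σ t)
  | .susp π X =>
      match σ X with
      | some t => permTrm π t
      | none => .susp π X

lemma swap_swap (p : Atom × Atom) (a : Atom) : swap p (swap p a) = a := by
  rcases p with ⟨x, y⟩
  simp only [swap]
  split_ifs <;> simp_all

lemma swap_right (x y : Atom) : swap (x, y) y = x := by
  simp only [swap]; split_ifs <;> simp_all

lemma swap_other {x y a : Atom} (h1 : a ≠ x) (h2 : a ≠ y) : swap (x, y) a = a := by
  simp [swap, h1, h2]

lemma permAtom_append (π π' : Perm) (a : Atom) :
    permAtom (π ++ π') a = permAtom π (permAtom π' a) := by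
  induction π with
  | nil => rfl
  | cons p π ih => simp [permAtom, ih]

lemma permAtom_rev_left (π : Perm) (a : Atom) :
    permAtom π.reverse (permAtom π a) = a := by
  induction π generalizing a with
  | nil => rfl
  | cons p π ih =>
    simp only [List.reverse_cons, permAtom, permAtom_append]
    show permAtom π.reverse (permAtom [p] (swap p (permAtom π a))) = a
    simp [permAtom, swap_swap, ih]

lemma permAtom_rev_right (π : Perm) (a : Atom) :
    permAtom π (permAtom π.reverse a) = a := by
  have := permAtom_rev_left π.reverse a
  rwa [List.reverse_reverse] at this

lemma permAtom_inj {π : Perm} {a b : Atom} (h : permAtom π a = permAtom π b) : a = b := by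
  have := congrArg (permAtom π.reverse) h
  rwa [permAtom_rev_left, permAtom_rev_left] at this

lemma permTrm_nil (t : Trm) : permTrm [] t = t := by
  induction t <;> simp_all [permTrm, permAtom]

lemma permTrm_append (π π' : Perm) (t : Trm) :
    permTrm (π ++ π') t = permTrm π (permTrm π' t) := by
  induction t <;> simp_all [permTrm, permAtom_append]

lemma subst_permTrm (σ : Var → Option Trm) (π : Perm) (t : Trm) :
    subst σ (permTrm π t) = permTrm π (subst σ t) := by
  induction t with
  | susp π' X =>
    simp only [permTrm, subst]
    cases σ X with
    | none => rfl
    | some s => simp [permTrm_append]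
  | _ => simp_all [permTrm, subst]

lemma fresh_perm {Γ : Env} {a : Atom} {t : Trm} (π : Perm) (h : fresh Γ a t) :
    fresh Γ (permAtom π a) (permTrm π t) := by
  induction h with
  | unit => exact .unit
  | pair _ _ ih1 ih2 => exact .pair ih1 ih2
  | fn _ ih => exact .fn ih
  | abs₁ => exact .abs₁
  | abs₂ hne _ ih => exact .abs₂ (fun h => hne (permAtom_inj h)) ih
  | atom hne => exact .atom (fun h => hne (permAtom_inj h))
  | @susp π' X hmem =>
    refine .susp ?_
    have : permAtom (π ++ π').reverse (permAtom π a) = permAtom π'.reverse a := by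
      rw [List.reverse_append, permAtom_append, permAtom_rev_left]
    rw [this]
    exact hmem

lemma fresh_subst {Γ Γ' : Env} {σ : Var → Option Trm} {a : Atom} {t : Trm}
    (h : fresh Γ' a t)
    (hσ : ∀ a X, (a, X) ∈ Γ' → fresh Γ a (subst σ (Trm.susp [] X))) :
    fresh Γ a (subst σ t) := by
  induction h with
  | unit => exact .unit
  | pair _ _ ih1 ih2 => exact .pair ih1 ih2
  | fn _ ih => exact .fn ih
  | abs₁ => exact .abs₁
  | abs₂ hne _ ih => exact .abs₂ hne ih
  | atom hne => exact .atom hne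
  | @susp π X hmem =>
    have hb := hσ _ _ hmem
    simp only [subst] at hb ⊢
    cases hσX : σ X with
    | none =>
      rw [hσX] at hb
      cases hb with
      | susp hmem' =>
        simp only [List.reverse_nil] at hmem'
        exact .susp hmem'
    | some s =>
      rw [hσX] at hb
      simp only [permTrm_nil] at hb
      show fresh Γ a (permTrm π s)
      have := fresh_perm π hb
      rwa [permAtom_rev_right] at this

lemma equ_perm_perm {Γ : Env} (t : Trm) : ∀ π π' : Perm,
    (∀ c ∈ ds π π', fresh Γ c t) → equ Γ (permTrm π t) (permTrm π' t) := by
  induction t with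
  | unit => intro π π' _; exact .unit
  | pair t₁ t₂ ih1 ih2 =>
    intro π π' hf
    refine .pair (ih1 π π' ?_) (ih2 π π' ?_) <;>
      · intro c hc
        cases hf c hc with | pair h1 h2 => first | exact h1 | exact h2
  | fn f t ih =>
    intro π π' hf
    refine .fn (ih π π' fun c hc => ?_)
    cases hf c hc with | fn h => exact h
  | atom a =>
    intro π π' hf
    by_cases ha : a ∈ ds π π'
    · cases hf a ha with | atom hne => exact absurd rfl hne
    · simp only [ds, Set.mem_setOf_eq, not_not] at ha
      simp only [permTrm, ha]
      exact .atom
  | susp π'' X =>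
    intro π π' hf
    simp only [permTrm]
    refine .susp fun c hc => ?_
    simp only [ds, Set.mem_setOf_eq, permAtom_append] at hc
    have hb : permAtom π'' c ∈ ds π π' := hc
    have := hf _ hb
    cases this with
    | susp hmem =>
      rwa [permAtom_rev_left] at hmem
  | abs a t ih =>
    intro π π' hf
    simp only [permTrm]
    by_cases ha : permAtom π a = permAtom π' a
    · rw [ha]
      refine .abs₁ (ih π π' fun c hc => ?_)
      have hca : c ≠ a := fun h => by subst h; exact hc ha
      cases hf c hc with
      | abs₁ => exact absurd rfl hca
      | abs₂ _ h => exact h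
    · -- goal: equ Γ (abs (πa) (permTrm π t)) (abs (π'a) (permTrm π' t))
      have hsub : ∀ c : Atom, c ≠ a → c ∈ ds π π' → fresh Γ c t := by
        intro c hca hc
        cases hf c hc with
        | abs₁ => exact absurd rfl hca
        | abs₂ _ h => exact h
      refine .abs₂ ha ?_ ?_
      · -- fresh Γ (permAtom π a) (permTrm π' t)
        set c := permAtom π'.reverse (permAtom π a) with hc
        have hc' : permAtom π' c = permAtom π a := permAtom_rev_right π' _
        have hca : c ≠ a := by
          intro h; rw [h] at hc'; exact ha hc'.symm
        have hcd : c ∈ ds π π' := by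
          intro h
          exact hca (permAtom_inj (π := π) (h.trans hc'))
        have := fresh_perm π' (hsub c hca hcd)
        rwa [hc'] at this
      · rw [← permTrm_append]
        refine ih π ([(permAtom π a, permAtom π' a)] ++ π') fun c hc => ?_
        simp only [ds, Set.mem_setOf_eq, permAtom_append] at hc
        have hc1 : permAtom [(permAtom π a, permAtom π' a)] (permAtom π' c)
            = swap (permAtom π a, permAtom π' a) (permAtom π' c) := rfl
        rw [hc1] at hc
        have hca : c ≠ a := by
          intro h; subst h
          exact hc (swap_right _ _).symm
        refine hsub c hca ?_
        intro hd
        rw [hd] at hc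
        -- hc : permAtom π' c ≠ swap (πa, π'a) (permAtom π' c)
        have : permAtom π' c = permAtom π a ∨ permAtom π' c = permAtom π' a := by
          by_contra hcon
          push_neg at hcon
          exact hc (swap_other hcon.1 hcon.2).symm
        rcases this with h | h
        · exact hca (permAtom_inj (π := π) (hd.trans h))
        · exact hca (permAtom_inj (π := π') h)

theorem equ_subst (Γ Γ' : Env) (σ : Var → Option Trm) (t₁ t₂ : Trm)
    (h : equ Γ' t₁ t₂)
    (hσ : ∀ a X, (a, X) ∈ Γ' → fresh Γ a (subst σ (Trm.susp [] X))) :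
    equ Γ (subst σ t₁) (subst σ t₂) := by
  induction h with
  | unit => exact .unit
  | pair _ _ ih1 ih2 => exact .pair ih1 ih2
  | fn _ ih => exact .fn ih
  | abs₁ _ ih => exact .abs₁ ih
  | abs₂ hne hf _ ih =>
    refine .abs₂ hne (fresh_subst hf hσ) ?_
    rw [← subst_permTrm]
    exact ih
  | atom => exact .atom
  | @susp π π' X hds =>
    simp only [subst]
    cases hσX : σ X with
    | none =>
      refine .susp fun c hc => ?_
      have := hσ _ _ (hds c hc)
      simp only [subst, hσX] at this
      cases this with
      | susp hmem => simpa [permAtom] using hmem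
    | some s =>
      refine equ_perm_perm s π π' fun c hc => ?_
      have := hσ _ _ (hds c hc)
      simp only [subst, hσX] at this
      rwa [permTrm_nil] at this
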